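/- The optimized certainty equivalent is real-valued and the infimum in its definition is attained: if l(x) > x for all |x| large enough, then for every bounded random variable X, the function r ↦ E[l(X − r)] + r attains a finite minimum on a compact interval of ℝ. -/

import Mathlib

open MeasureTheory

/-- Under the coercivity condition `l(x) > x` for all large `|x|`, the infimum
defining the OCE of a bounded random variable is attained at some point of a
compact interval. -/
theorem oce_attained {Ω : Type*} [MeasurableSpace Ω] (μ : Measure Ω)
    [IsProbabilityMeasure μ]
    (l : ℝ → ℝ) (hconv : ConvexOn ℝ Set.univ l) (hmono : Monotone l) (h0 : l 0 = 0)
    (hC : ∃ M : ℝ, ∀ x : ℝ, M ≤ |x| → x < l x)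
    (X : Ω → ℝ) (hX : Measurable X) (C : ℝ) (hXb : ∀ ω, |X ω| ≤ C) :
    ∃ a b r₀ : ℝ, r₀ ∈ Set.Icc a b ∧
      ∀ r : ℝ, (∫ ω, l (X ω - r₀) ∂μ) + r₀ ≤ (∫ ω, l (X ω - r) ∂μ) + r := by
  classical
  have hlm : Measurable l := hmono.measurable
  -- Ω is nonempty, hence C ≥ 0
  have hΩ : Nonempty Ω := by
    by_contra h
    rw [not_nonempty_iff] at h
    have h1 : μ Set.univ = 1 := measure_univ
    rw [Set.univ_eq_empty_iff.mpr h, measure_empty] at h1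
    exact zero_ne_one h1
  obtain ⟨ω₀⟩ := hΩ
  have hC0 : 0 ≤ C := le_trans (abs_nonneg _) (hXb ω₀)
  obtain ⟨M, hM⟩ := hC
  set p : ℝ := max M 1 with hpdef
  have hp1 : (1 : ℝ) ≤ p := le_max_right _ _
  have hp0 : (0 : ℝ) < p := lt_of_lt_of_le one_pos hp1
  have hgp : p < l p := hM p (by rw [abs_of_pos hp0]; exact le_max_left _ _)
  have hgq : -p < l (-p) := hM (-p) (by rw [abs_neg, abs_of_pos hp0]; exact le_max_left _ _)
  set A : ℝ := l p / p with hAdef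
  set B : ℝ := -l (-p) / p with hBdef
  have hA1 : 1 < A := (lt_div_iff₀ hp0).mpr (by linarith)
  have hB1 : B < 1 := (div_lt_iff₀ hp0).mpr (by linarith)
  -- key pointwise growth bounds from convexity through (0, l 0) = (0,0)
  have key1 : ∀ y : ℝ, p ≤ y → A * y ≤ l y := by
    intro y hy
    have hy0 : 0 < y := lt_of_lt_of_le hp0 hy
    have ht0 : (0:ℝ) ≤ p / y := le_of_lt (div_pos hp0 hy0)
    have ht1 : (0:ℝ) ≤ 1 - p / y := by
      have : p / y ≤ 1 := (div_le_one hy0).mpr hy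
      linarith
    have hcv := hconv.2 (Set.mem_univ y) (Set.mem_univ (0:ℝ)) ht0 ht1 (by ring)
    simp only [smul_eq_mul, mul_zero, add_zero, h0] at hcv
    rw [div_mul_cancel₀ _ (ne_of_gt hy0)] at hcv
    -- hcv : l p ≤ p / y * l y
    have h1 : l p * y ≤ p / y * l y * y := mul_le_mul_of_nonneg_right hcv hy0.le
    have h2 : p / y * l y * y = l y * p := by field_simp
    rw [hAdef, div_mul_eq_mul_div, div_le_iff₀ hp0]
    linarith
  have key2 : ∀ y : ℝ, y ≤ -p → B * y ≤ l y := by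
    intro y hy
    have hny : 0 < -y := by linarith
    have ht0 : (0:ℝ) ≤ p / (-y) := le_of_lt (div_pos hp0 hny)
    have ht1 : (0:ℝ) ≤ 1 - p / (-y) := by
      have : p / (-y) ≤ 1 := (div_le_one hny).mpr (by linarith)
      linarith
    have hcv := hconv.2 (Set.mem_univ y) (Set.mem_univ (0:ℝ)) ht0 ht1 (by ring)
    simp only [smul_eq_mul, mul_zero, add_zero, h0] at hcv
    have hyne : y ≠ 0 := by linarith
    have hxy : p / (-y) * y = -p := by field_simp
    rw [hxy] at hcv
    -- hcv : l (-p) ≤ p / (-y) * l y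
    have h1 : l (-p) * (-y) ≤ p / (-y) * l y * (-y) :=
      mul_le_mul_of_nonneg_right hcv hny.le
    have h2 : p / (-y) * l y * (-y) = l y * p := by field_simp
    rw [hBdef, div_mul_eq_mul_div, div_le_iff₀ hp0]
    linarith
  -- integrability of ω ↦ l (X ω - r) for every r
  have hXlb : ∀ ω, -C ≤ X ω := fun ω => neg_le_of_abs_le (hXb ω)
  have hXub : ∀ ω, X ω ≤ C := fun ω => le_of_abs_le (hXb ω)
  have hint : ∀ r : ℝ, Integrable (fun ω => l (X ω - r)) μ := by
    intro r
    have hmeas : Measurable fun ω => l (X ω - r) := hlm.comp (hX.sub measurable_const)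
    refine Integrable.mono' (integrable_const (max |l (C + |r|)| |l (-(C + |r|))|))
      hmeas.aestronglyMeasurable ?_
    refine Filter.Eventually.of_forall fun ω => ?_
    have hub : l (X ω - r) ≤ l (C + |r|) := hmono (by
      have := hXub ω
      have := neg_abs_le r
      linarith)
    have hlb : l (-(C + |r|)) ≤ l (X ω - r) := hmono (by
      have := hXlb ω
      have := le_abs_self r
      linarith)
    rw [Real.norm_eq_abs, abs_le]
    constructor
    · calc -(max |l (C + |r|)| |l (-(C + |r|))|) ≤ -|l (-(C + |r|))| :=
            neg_le_neg (le_max_right _ _)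
        _ ≤ l (-(C + |r|)) := neg_abs_le _
        _ ≤ l (X ω - r) := hlb
    · calc l (X ω - r) ≤ l (C + |r|) := hub
        _ ≤ |l (C + |r|)| := le_abs_self _
        _ ≤ max |l (C + |r|)| |l (-(C + |r|))| := le_max_left _ _
  set F : ℝ → ℝ := fun r => (∫ ω, l (X ω - r) ∂μ) + r with hFdef
  -- convexity of F
  have hFconv : ConvexOn ℝ Set.univ F := by
    refine ⟨convex_univ, ?_⟩
    intro r _ s _ t₁ t₂ ht₁ ht₂ hts
    simp only [smul_eq_mul, hFdef]
    have hpt : ∀ ω, l (X ω - (t₁ * r + t₂ * s)) ≤ t₁ * l (X ω - r) + t₂ * l (X ω - s) := by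
      intro ω
      have hx : X ω - (t₁ * r + t₂ * s) = t₁ * (X ω - r) + t₂ * (X ω - s) := by
        linear_combination (X ω) * hts.symm
      rw [hx]
      have := hconv.2 (Set.mem_univ (X ω - r)) (Set.mem_univ (X ω - s)) ht₁ ht₂ hts
      simpa using this
    have hI : (∫ ω, l (X ω - (t₁ * r + t₂ * s)) ∂μ) ≤
        ∫ ω, t₁ * l (X ω - r) + t₂ * l (X ω - s) ∂μ :=
      integral_mono (hint _) (((hint r).const_mul t₁).add ((hint s).const_mul t₂)) hpt
    have hsplit : (∫ ω, t₁ * l (X ω - r) + t₂ * l (X ω - s) ∂μ) =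
        t₁ * (∫ ω, l (X ω - r) ∂μ) + t₂ * (∫ ω, l (X ω - s) ∂μ) := by
      rw [integral_add ((hint r).const_mul t₁) ((hint s).const_mul t₂),
        integral_const_mul, integral_const_mul]
    calc (∫ ω, l (X ω - (t₁ * r + t₂ * s)) ∂μ) + (t₁ * r + t₂ * s)
        ≤ (∫ ω, t₁ * l (X ω - r) + t₂ * l (X ω - s) ∂μ) + (t₁ * r + t₂ * s) := by linarith
      _ = t₁ * ((∫ ω, l (X ω - r) ∂μ) + r) + t₂ * ((∫ ω, l (X ω - s) ∂μ) + s) := by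
          rw [hsplit]; ring
  have hFcont : ContinuousOn F Set.univ := hFconv.continuousOn isOpen_univ
  -- the value at 0 is at most l C
  have hF0 : F 0 ≤ l C := by
    have h1 : (∫ ω, l (X ω - 0) ∂μ) ≤ ∫ _ω, l C ∂μ :=
      integral_mono (hint 0) (integrable_const _)
        (fun ω => hmono (by have := hXub ω; linarith))
    simp only [integral_const, measure_univ, probReal_univ, ENNReal.toReal_one, smul_eq_mul, one_mul] at h1
    simp only [hFdef, add_zero]
    exact h1
  -- lower bound for F on both tails
  have tailR : ∀ r : ℝ, C + p ≤ r → B * (-C - r) + r ≤ F r := by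
    intro r hr
    have h1 : (∫ _ω, l (-C - r) ∂μ) ≤ ∫ ω, l (X ω - r) ∂μ :=
      integral_mono (integrable_const _) (hint r)
        (fun ω => hmono (by have := hXlb ω; linarith))
    simp only [integral_const, measure_univ, probReal_univ, ENNReal.toReal_one, smul_eq_mul, one_mul] at h1
    have h2 : B * (-C - r) ≤ l (-C - r) := key2 _ (by linarith)
    simp only [hFdef]
    linarith
  have tailL : ∀ r : ℝ, r ≤ -(C + p) → A * (-C - r) + r ≤ F r := by
    intro r hr
    have h1 : (∫ _ω, l (-C - r) ∂μ) ≤ ∫ ω, l (X ω - r) ∂μ :=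
      integral_mono (integrable_const _) (hint r)
        (fun ω => hmono (by have := hXlb ω; linarith))
    simp only [integral_const, measure_univ, probReal_univ, ENNReal.toReal_one, smul_eq_mul, one_mul] at h1
    have h2 : A * (-C - r) ≤ l (-C - r) := key1 _ (by linarith)
    simp only [hFdef]
    linarith
  -- choose the compact interval
  set b : ℝ := max (C + p) ((l C + B * C) / (1 - B)) with hbdef
  set a : ℝ := min (-(C + p)) ((l C + A * C) / (1 - A)) with hadef
  have ha0 : a ≤ 0 := le_trans (min_le_left _ _) (by linarith)
  have hb0 : 0 ≤ b := le_trans (by positivity) (le_max_left _ _)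
  have hab : a ≤ b := le_trans ha0 hb0
  -- F attains its minimum on [a, b]
  obtain ⟨r₀, hr₀mem, hr₀min⟩ :=
    isCompact_Icc.exists_isMinOn (Set.nonempty_Icc.mpr hab)
      (hFcont.mono (Set.subset_univ _))
  have hmin : ∀ x ∈ Set.Icc a b, F r₀ ≤ F x := fun x hx => hr₀min hx
  refine ⟨a, b, r₀, hr₀mem, ?_⟩
  intro r
  show F r₀ ≤ F r
  have hF0' : F r₀ ≤ l C := le_trans (hmin 0 ⟨ha0, hb0⟩) hF0
  by_cases hr : r ∈ Set.Icc a b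
  · exact hmin r hr
  · rw [Set.mem_Icc, not_and_or, not_le, not_le] at hr
    rcases hr with hr | hr
    · -- r < a
      have hr1 : r ≤ -(C + p) := le_of_lt (lt_of_lt_of_le hr (min_le_left _ _))
      have hr2 : r ≤ (l C + A * C) / (1 - A) := le_of_lt (lt_of_lt_of_le hr (min_le_right _ _))
      have hA0 : (0:ℝ) < A - 1 := by linarith
      have hr3 : l C + A * C ≤ (1 - A) * r := by
        rw [le_div_iff_of_neg (by linarith : 1 - A < 0)] at hr2
        linarith
      have : l C ≤ A * (-C - r) + r := by nlinarith
      linarith [tailL r hr1]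
    · -- b < r
      have hr1 : C + p ≤ r := le_of_lt (lt_of_le_of_lt (le_max_left _ _) hr)
      have hr2 : (l C + B * C) / (1 - B) ≤ r := le_of_lt (lt_of_le_of_lt (le_max_right _ _) hr)
      have hr3 : l C + B * C ≤ (1 - B) * r := by
        rw [div_le_iff₀ (by linarith : (0:ℝ) < 1 - B)] at hr2
        linarith
      have : l C ≤ B * (-C - r) + r := by nlinarith
      linarith [tailR r hr1]
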